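/- (Generalized Stolz–Cesàro step.) Let λ < 1/2 and β > 0, let (p_{i,n}) be a Zipf array, and set φ_{i,n} := φ(p_{i,n}, n). Let (u_{i,n}) be real numbers (n ≥ 2, 1 ≤ i ≤ n) for which there exists M with |u_{i,n}| ≤ M·φ_{i,n} for all i, n, and let ℓ be a real number such that for every ε > 0 there exists δ > 0 with: n·p_{i,n} ≤ δ implies |u_{i,n}/φ_{i,n} − ℓ| ≤ ε. Then lim_{n→∞} (Σ_{i=1}^{n} u_{i,n})/(Σ_{i=1}^{n} φ_{i,n}) = ℓ. -/

import Mathlib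

open MeasureTheory Real Filter Topology

/-- The weight `φ(p,n) = p^{2λ} (1 + (βnp)⁻¹)^{-1+2λ}`. -/
noncomputable def phiW (lam β : ℝ) (p : ℝ) (n : ℕ) : ℝ :=
  p ^ (2 * lam) * (1 + (β * n * p)⁻¹) ^ (-1 + 2 * lam)

/-- `p` is a Zipf array with constants `κ₁ ≤ κ₂`. -/
def IsZipfArray (p : ℕ → ℕ → ℝ) (κ₁ κ₂ : ℝ) : Prop :=
  0 < κ₁ ∧ κ₁ ≤ κ₂ ∧ ∀ n : ℕ, 2 ≤ n → ∀ i : ℕ, 1 ≤ i → i ≤ n →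
    0 < p i n ∧ p i n ≤ 1 ∧
    κ₁ / ((i : ℝ) * Real.log n) ≤ p i n ∧ p i n ≤ κ₂ / ((i : ℝ) * Real.log n)


-- Bernoulli step
lemma bern_step {a : ℝ} (ha0 : 0 < a) (ha1 : a < 1) (k : ℕ) :
    (1-a) * ((k:ℝ)+1) ^ (-a) ≤ ((k:ℝ)+1) ^ (1-a) - (k:ℝ) ^ (1-a) := by
  have hk1 : (0:ℝ) < (k:ℝ)+1 := by positivity
  have hs : (-1:ℝ) ≤ -(1/((k:ℝ)+1)) := by
    rw [neg_le_neg_iff]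
    rw [div_le_one hk1]; linarith [Nat.cast_nonneg (α := ℝ) k]
  have hb := rpow_one_add_le_one_add_mul_self hs (by linarith : (0:ℝ) ≤ 1-a) (by linarith : (1:ℝ)-a ≤ 1)
  -- hb : (1 + -(1/(k+1))) ^ (1-a) ≤ 1 + (1-a) * -(1/(k+1))
  have hbase : (1:ℝ) + -(1/((k:ℝ)+1)) = (k:ℝ)/((k:ℝ)+1) := by field_simp; ring
  rw [hbase] at hb
  have hmul := mul_le_mul_of_nonneg_left hb (le_of_lt (rpow_pos_of_pos hk1 (1-a)))
  have e1 : ((k:ℝ)+1) ^ (1-a) * ((k:ℝ)/((k:ℝ)+1)) ^ (1-a) = (k:ℝ) ^ (1-a) := by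
    rw [← Real.mul_rpow hk1.le (by positivity)]
    congr 1; field_simp
  have e2 : ((k:ℝ)+1) ^ (1-a) * (1/((k:ℝ)+1)) = ((k:ℝ)+1) ^ (-a) := by
    rw [show ((k:ℝ)+1)^(1-a) = ((k:ℝ)+1)^(-a) * ((k:ℝ)+1) by
      rw [← Real.rpow_add_one hk1.ne']; ring_nf]
    field_simp
  rw [e1, mul_add, mul_one, mul_comm ((1:ℝ)-a), ← mul_assoc, mul_neg, e2] at hmul
  linarith [hmul]

-- power sum bound
lemma sum_rpow_le {a : ℝ} (ha : a < 1) (m : ℕ) :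
    ∑ i ∈ Finset.Icc 1 m, (i:ℝ) ^ (-a) ≤ max 1 (1-a)⁻¹ * (m:ℝ) ^ (1-a) := by
  have h1a : (0:ℝ) < 1 - a := by linarith
  have hshift : ∑ i ∈ Finset.Icc 1 m, (i:ℝ) ^ (-a)
      = ∑ k ∈ Finset.range m, (((k:ℝ))+1) ^ (-a) := by
    rw [show Finset.Icc 1 m = Finset.Ico 1 (m+1) by rw [Finset.Ico_add_one_right_eq_Icc],
      Finset.sum_Ico_eq_sum_range]
    simp [add_comm]
  rcases le_or_gt a 0 with ha0 | ha0
  · -- each term ≤ m^(-a)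
    rcases Nat.eq_zero_or_pos m with rfl | hm
    · simp [Real.rpow_nonneg]
    have hbound : ∀ i ∈ Finset.Icc 1 m, (i:ℝ) ^ (-a) ≤ (m:ℝ) ^ (-a) := by
      intro i hi
      simp only [Finset.mem_Icc] at hi
      exact Real.rpow_le_rpow (Nat.cast_nonneg i) (by exact_mod_cast hi.2) (by linarith)
    calc ∑ i ∈ Finset.Icc 1 m, (i:ℝ) ^ (-a) ≤ ∑ _i ∈ Finset.Icc 1 m, (m:ℝ) ^ (-a) :=
          Finset.sum_le_sum hbound
      _ = m * (m:ℝ) ^ (-a) := by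
          rw [Finset.sum_const, Nat.card_Icc]; simp
      _ = (m:ℝ) ^ (1-a) := by
          rw [show (1:ℝ)-a = -a + 1 by ring, Real.rpow_add_one (by positivity : (m:ℝ) ≠ 0)]
          ring
      _ ≤ max 1 (1-a)⁻¹ * (m:ℝ) ^ (1-a) := by
          nth_rewrite 1 [← one_mul ((m:ℝ)^(1-a))]
          exact mul_le_mul_of_nonneg_right (le_max_left _ _) (by positivity)
  · -- telescope
    have key : ∀ k ∈ Finset.range m, ((k:ℝ)+1) ^ (-a)
        ≤ (1-a)⁻¹ * ((((k:ℝ)+1)) ^ (1-a) - (k:ℝ) ^ (1-a)) := by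
      intro k _
      calc ((k:ℝ)+1) ^ (-a) = (1-a)⁻¹ * ((1-a) * ((k:ℝ)+1)^(-a)) := by
            field_simp
        _ ≤ _ := mul_le_mul_of_nonneg_left (bern_step ha0 ha k) (by positivity)
    calc ∑ i ∈ Finset.Icc 1 m, (i:ℝ) ^ (-a)
        = ∑ k ∈ Finset.range m, (((k:ℝ))+1) ^ (-a) := hshift
      _ ≤ ∑ k ∈ Finset.range m, (1-a)⁻¹ * ((((k:ℝ)+1)) ^ (1-a) - (k:ℝ) ^ (1-a)) :=
          Finset.sum_le_sum key
      _ = (1-a)⁻¹ * ((m:ℝ) ^ (1-a) - (0:ℝ) ^ (1-a)) := by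
          rw [← Finset.mul_sum]
          congr 1
          have := Finset.sum_range_sub (fun k : ℕ => ((k:ℝ)) ^ (1-a)) m
          simpa using this
      _ ≤ max 1 (1-a)⁻¹ * (m:ℝ) ^ (1-a) := by
          rw [Real.zero_rpow h1a.ne', sub_zero]
          exact mul_le_mul_of_nonneg_right (le_max_right _ _) (by positivity)

-- harmonic lower bound
lemma harmonic_lb (m n : ℕ) (hmn : m ≤ n) :
    Real.log (((n:ℝ)+1)/((m:ℝ)+1)) ≤ ∑ i ∈ Finset.Icc (m+1) n, (1:ℝ)/i := by
  have key : ∀ i ∈ Finset.Icc (m+1) n, Real.log ((i:ℝ)+1) - Real.log i ≤ 1/(i:ℝ) := by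
    intro i hi
    simp only [Finset.mem_Icc] at hi
    have hi0 : (0:ℝ) < i := by exact_mod_cast Nat.lt_of_lt_of_le (Nat.succ_pos m) hi.1
    rw [← Real.log_div (by positivity) hi0.ne']
    have : ((i:ℝ)+1)/i = 1 + 1/i := by field_simp
    rw [this]
    have := Real.log_le_sub_one_of_pos (show (0:ℝ) < 1 + 1/i by positivity)
    linarith
  have tel : ∑ i ∈ Finset.Icc (m+1) n, (Real.log ((i:ℝ)+1) - Real.log i)
      = Real.log ((n:ℝ)+1) - Real.log ((m:ℝ)+1) := by
    rw [show Finset.Icc (m+1) n = Finset.Ico (m+1) (n+1) by rw [Finset.Ico_add_one_right_eq_Icc],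
      Finset.sum_Ico_eq_sub _ (by omega)]
    have h1 := Finset.sum_range_sub (fun k : ℕ => Real.log k) (n+1)
    have h2 := Finset.sum_range_sub (fun k : ℕ => Real.log k) (m+1)
    simp only [Nat.cast_add, Nat.cast_one] at h1 h2 ⊢
    rw [h1, h2]
    simp
  calc Real.log (((n:ℝ)+1)/((m:ℝ)+1))
      = Real.log ((n:ℝ)+1) - Real.log ((m:ℝ)+1) := Real.log_div (by positivity) (by positivity)
    _ = ∑ i ∈ Finset.Icc (m+1) n, (Real.log ((i:ℝ)+1) - Real.log i) := tel.symm
    _ ≤ ∑ i ∈ Finset.Icc (m+1) n, (1:ℝ)/i := Finset.sum_le_sum key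


lemma phi_pos {lam β pp : ℝ} (hβ : 0 < β) (hp : 0 < pp) {n : ℕ} (hn : 0 < n) :
    0 < phiW lam β pp n := by
  have h1 : (0:ℝ) < β * n * pp := by positivity
  have : (0:ℝ) < 1 + (β * n * pp)⁻¹ := by positivity
  exact mul_pos (rpow_pos_of_pos hp _) (rpow_pos_of_pos this _)

lemma phi_le {lam β pp : ℝ} (hβ : 0 < β) (hp : 0 < pp) {n : ℕ} (hn : 0 < n)
    (hlam : 2*lam < 1) : phiW lam β pp n ≤ pp ^ (2*lam) := by
  have hx : (0:ℝ) < β * n * pp := by positivity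
  have h1 : (1 + (β * n * pp)⁻¹) ^ (-1 + 2*lam) ≤ 1 :=
    Real.rpow_le_one_of_one_le_of_nonpos (by nlinarith [inv_pos.2 hx]) (by linarith)
  calc phiW lam β pp n ≤ pp ^ (2*lam) * 1 := by
        unfold phiW
        exact mul_le_mul_of_nonneg_left h1 (Real.rpow_nonneg hp.le _)
    _ = pp ^ (2*lam) := mul_one _

lemma log_ge_one {n : ℕ} (hn : 3 ≤ n) : 1 ≤ Real.log n := by
  rw [Real.le_log_iff_exp_le (by positivity)]
  calc Real.exp 1 ≤ 2.7182818286 := Real.exp_one_lt_d9.le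
    _ ≤ 3 := by norm_num
    _ ≤ (n:ℝ) := by exact_mod_cast hn

lemma bad_sum {lam β κ₁ κ₂ δ : ℝ} (hlam : 2*lam < 1) (hβ : 0 < β) (hκ₁ : 0 < κ₁)
    (hκ : κ₁ ≤ κ₂) (hδ : 0 < δ) {p : ℕ → ℕ → ℝ} {n : ℕ} (hn : 3 ≤ n)
    (hp : ∀ i : ℕ, 1 ≤ i → i ≤ n → 0 < p i n ∧
      κ₁ / ((i : ℝ) * Real.log n) ≤ p i n ∧ p i n ≤ κ₂ / ((i : ℝ) * Real.log n)) :
    ∑ i ∈ (Finset.Icc 1 n).filter (fun i => δ < (n:ℝ) * p i n), phiW lam β (p i n) n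
      ≤ (max (κ₁ ^ (2*lam)) (κ₂ ^ (2*lam)) * max 1 (1-2*lam)⁻¹ * (κ₂/δ) ^ (1-2*lam))
          * (n:ℝ) ^ (1-2*lam) / Real.log n := by
  have hκ₂ : 0 < κ₂ := lt_of_lt_of_le hκ₁ hκ
  set L := Real.log n with hLdef
  have hL : 1 ≤ L := log_ge_one hn
  have hL0 : (0:ℝ) < L := by linarith
  have hn0 : 0 < n := by omega
  have hnR : (0:ℝ) < n := by exact_mod_cast hn0
  set m := ⌊κ₂ * n / (δ * L)⌋₊ with hmdef
  set C₃ := max (κ₁ ^ (2*lam)) (κ₂ ^ (2*lam)) with hC₃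
  have hC₃0 : 0 < C₃ := lt_max_of_lt_left (Real.rpow_pos_of_pos hκ₁ _)
  -- pointwise bound on the bad set
  have hpoint : ∀ i ∈ (Finset.Icc 1 n).filter (fun i => δ < (n:ℝ) * p i n),
      phiW lam β (p i n) n ≤ C₃ * (i:ℝ) ^ (-(2*lam)) * L ^ (-(2*lam)) := by
    intro i hi
    simp only [Finset.mem_filter, Finset.mem_Icc] at hi
    obtain ⟨⟨hi1, hin⟩, _⟩ := hi
    obtain ⟨hp0, hplb, hpub⟩ := hp i hi1 hin
    have hiR : (0:ℝ) < i := by exact_mod_cast hi1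
    have hiL : (0:ℝ) < (i:ℝ) * L := by positivity
    have key : (p i n) ^ (2*lam) ≤ C₃ * ((i:ℝ) * L) ^ (-(2*lam)) := by
      rcases le_or_gt 0 (2*lam) with hs | hs
      · calc (p i n) ^ (2*lam) ≤ (κ₂ / ((i:ℝ) * L)) ^ (2*lam) :=
              Real.rpow_le_rpow hp0.le hpub hs
          _ = κ₂ ^ (2*lam) * ((i:ℝ) * L) ^ (-(2*lam)) := by
              rw [Real.div_rpow hκ₂.le hiL.le, Real.rpow_neg hiL.le, div_eq_mul_inv]
          _ ≤ C₃ * ((i:ℝ) * L) ^ (-(2*lam)) := by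
              exact mul_le_mul_of_nonneg_right (le_max_right _ _) (by positivity)
      · calc (p i n) ^ (2*lam) ≤ (κ₁ / ((i:ℝ) * L)) ^ (2*lam) :=
              Real.rpow_le_rpow_of_nonpos (by positivity) hplb hs.le
          _ = κ₁ ^ (2*lam) * ((i:ℝ) * L) ^ (-(2*lam)) := by
              rw [Real.div_rpow hκ₁.le hiL.le, Real.rpow_neg hiL.le, div_eq_mul_inv]
          _ ≤ C₃ * ((i:ℝ) * L) ^ (-(2*lam)) := by
              exact mul_le_mul_of_nonneg_right (le_max_left _ _) (by positivity)
    calc phiW lam β (p i n) n ≤ (p i n) ^ (2*lam) := phi_le hβ hp0 hn0 hlam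
      _ ≤ C₃ * ((i:ℝ) * L) ^ (-(2*lam)) := key
      _ = C₃ * (i:ℝ) ^ (-(2*lam)) * L ^ (-(2*lam)) := by
          rw [Real.mul_rpow hiR.le hL0.le]; ring
  -- bad set inside Icc 1 m
  have hsub : (Finset.Icc 1 n).filter (fun i => δ < (n:ℝ) * p i n) ⊆ Finset.Icc 1 m := by
    intro i hi
    simp only [Finset.mem_filter, Finset.mem_Icc] at hi ⊢
    obtain ⟨⟨hi1, hin⟩, hbad⟩ := hi
    obtain ⟨hp0, hplb, hpub⟩ := hp i hi1 hin
    refine ⟨hi1, Nat.le_floor ?_⟩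
    have hiR : (0:ℝ) < i := by exact_mod_cast hi1
    have h1 : δ < (n:ℝ) * (κ₂ / ((i:ℝ) * L)) :=
      lt_of_lt_of_le hbad (by exact mul_le_mul_of_nonneg_left hpub hnR.le)
    have hiL : (0:ℝ) < (i:ℝ) * L := by positivity
    rw [mul_div_assoc'] at h1
    have h2 := (lt_div_iff₀ hiL).1 h1
    rw [le_div_iff₀ (by positivity : (0:ℝ) < δ * L)]
    nlinarith
  calc ∑ i ∈ (Finset.Icc 1 n).filter (fun i => δ < (n:ℝ) * p i n), phiW lam β (p i n) n
      ≤ ∑ i ∈ (Finset.Icc 1 n).filter (fun i => δ < (n:ℝ) * p i n),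
          C₃ * (i:ℝ) ^ (-(2*lam)) * L ^ (-(2*lam)) := Finset.sum_le_sum hpoint
    _ ≤ ∑ i ∈ Finset.Icc 1 m, C₃ * (i:ℝ) ^ (-(2*lam)) * L ^ (-(2*lam)) := by
        apply Finset.sum_le_sum_of_subset_of_nonneg hsub
        intro i _ _
        positivity
    _ = C₃ * L ^ (-(2*lam)) * ∑ i ∈ Finset.Icc 1 m, (i:ℝ) ^ (-(2*lam)) := by
        rw [Finset.mul_sum]; apply Finset.sum_congr rfl; intro i _; ring
    _ ≤ C₃ * L ^ (-(2*lam)) * (max 1 (1-2*lam)⁻¹ * (m:ℝ) ^ (1-2*lam)) := by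
        exact mul_le_mul_of_nonneg_left (sum_rpow_le hlam m) (by positivity)
    _ ≤ C₃ * L ^ (-(2*lam)) * (max 1 (1-2*lam)⁻¹ * (κ₂ * n / (δ * L)) ^ (1-2*lam)) := by
        have hfl : (m:ℝ) ≤ κ₂ * n / (δ * L) := Nat.floor_le (by positivity)
        have : (m:ℝ) ^ (1-2*lam) ≤ (κ₂ * n / (δ * L)) ^ (1-2*lam) :=
          Real.rpow_le_rpow (Nat.cast_nonneg m) hfl (by linarith)
        exact mul_le_mul_of_nonneg_left
          (mul_le_mul_of_nonneg_left this (by positivity)) (by positivity)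
    _ = C₃ * max 1 (1-2*lam)⁻¹ * (κ₂/δ) ^ (1-2*lam) * (n:ℝ) ^ (1-2*lam) / L := by
        have e1 : κ₂ * n / (δ * L) = (κ₂/δ) * ((n:ℝ) * L⁻¹) := by field_simp
        rw [e1, Real.mul_rpow (by positivity) (by positivity),
          Real.mul_rpow (by positivity) (by positivity),
          Real.inv_rpow hL0.le, ← Real.rpow_neg hL0.le]
        rw [show ∀ x y z w v : ℝ, x * y * (z * (w * (v * (L ^ (-(1-2*lam)))))) =
          (x * z * w * v) * (y * L ^ (-(1-2*lam))) from by intros; ring]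
        rw [← Real.rpow_add hL0, show -(2*lam) + -(1-2*lam) = -1 by ring,
          Real.rpow_neg_one]
        ring

lemma phi_eq {lam β pp : ℝ} (hβ : 0 < β) (hp : 0 < pp) {n : ℕ} (hn : 0 < n) :
    phiW lam β pp n = (β * n) ^ (1 - 2*lam) * pp * (1 + β * n * pp) ^ (-1 + 2*lam) := by
  have hβn : (0:ℝ) < β * n := by positivity
  have hx : (0:ℝ) < β * n * pp := by positivity
  have h1 : (1:ℝ) + (β * n * pp)⁻¹ = (1 + β * n * pp) / (β * n * pp) := by
    field_simp; ring
  have h2 : (β * ↑n * pp) ^ (-1 + 2 * lam) = (β * ↑n) ^ (-1 + 2*lam) * pp ^ (-1 + 2*lam) :=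
    Real.mul_rpow hβn.le hp.le
  have e1 : (β*↑n)^(1-2*lam) = ((β*↑n)^(-1+2*lam))⁻¹ := by
    rw [← Real.rpow_neg hβn.le]; ring_nf
  have e2 : pp^(2*lam) = pp * pp^(-1+2*lam) := by
    have h := Real.rpow_add hp 1 (-1+2*lam)
    rw [Real.rpow_one] at h
    conv_lhs => rw [show 2*lam = 1 + (-1+2*lam) by ring]
    exact h
  rw [phiW, h1, Real.div_rpow (by positivity) hx.le, h2, e1, e2]
  have A := (Real.rpow_pos_of_pos hβn (-1+2*lam)).ne'
  have B := (Real.rpow_pos_of_pos hp (-1+2*lam)).ne'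
  field_simp

lemma total_lb {lam β κ₁ κ₂ δ : ℝ} (hlam : 2*lam < 1) (hβ : 0 < β) (hκ₁ : 0 < κ₁)
    (hκ : κ₁ ≤ κ₂) (hδ : 0 < δ) {p : ℕ → ℕ → ℝ} {n : ℕ} (hn : 3 ≤ n)
    (hp : ∀ i : ℕ, 1 ≤ i → i ≤ n → 0 < p i n ∧
      κ₁ / ((i : ℝ) * Real.log n) ≤ p i n ∧ p i n ≤ κ₂ / ((i : ℝ) * Real.log n))
    (hmn : ⌊κ₂ * n / (δ * Real.log n)⌋₊ + 1 ≤ n) :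
    (β ^ (1-2*lam) * (1+β*δ) ^ (-1+2*lam) * κ₁) * (n:ℝ) ^ (1-2*lam) / Real.log n
        * Real.log (((n:ℝ)+1)/((⌊κ₂ * n / (δ * Real.log n)⌋₊:ℝ)+1))
      ≤ ∑ i ∈ Finset.Icc 1 n, phiW lam β (p i n) n := by
  have hκ₂ : 0 < κ₂ := lt_of_lt_of_le hκ₁ hκ
  set L := Real.log n with hLdef
  have hL : 1 ≤ L := log_ge_one hn
  have hL0 : (0:ℝ) < L := by linarith
  have hn0 : 0 < n := by omega
  have hnR : (0:ℝ) < n := by exact_mod_cast hn0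
  set m := ⌊κ₂ * n / (δ * L)⌋₊ with hmdef
  set c := β ^ (1-2*lam) * (1+β*δ) ^ (-1+2*lam) * κ₁ with hcdef
  have hc0 : 0 < c := by
    apply mul_pos (mul_pos (Real.rpow_pos_of_pos hβ _) (Real.rpow_pos_of_pos (by positivity) _)) hκ₁
  -- pointwise lower bound on the tail
  have hpoint : ∀ i ∈ Finset.Icc (m+1) n,
      c * (n:ℝ) ^ (1-2*lam) / L * (1/(i:ℝ)) ≤ phiW lam β (p i n) n := by
    intro i hi
    simp only [Finset.mem_Icc] at hi
    obtain ⟨hi1, hin⟩ := hi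
    have hi1' : 1 ≤ i := by omega
    obtain ⟨hp0, hplb, hpub⟩ := hp i hi1' hin
    have hiR : (0:ℝ) < i := by exact_mod_cast hi1'
    have hiL : (0:ℝ) < (i:ℝ) * L := by positivity
    -- n * p i n ≤ δ
    have hgood : (n:ℝ) * p i n ≤ δ := by
      have h1 : (n:ℝ) * p i n ≤ (n:ℝ) * (κ₂ / ((i:ℝ)*L)) :=
        mul_le_mul_of_nonneg_left hpub hnR.le
      have h2 : κ₂ * n / (δ*L) < (i:ℝ) := by
        calc κ₂ * n / (δ*L) < (m:ℝ) + 1 := Nat.lt_floor_add_one _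
          _ ≤ (i:ℝ) := by exact_mod_cast hi1
      have h3 : (n:ℝ) * (κ₂ / ((i:ℝ)*L)) ≤ δ := by
        rw [mul_div_assoc', div_le_iff₀ hiL]
        rw [div_lt_iff₀ (by positivity)] at h2
        nlinarith
      linarith
    -- lower bound via phi_eq
    have hβnp : (0:ℝ) < β * n * p i n := by positivity
    have hfac : (1+β*δ) ^ (-1+2*lam) ≤ (1 + β * n * p i n) ^ (-1+2*lam) := by
      apply Real.rpow_le_rpow_of_nonpos (by positivity) _ (by linarith)
      have : β * (n * p i n) ≤ β * δ := mul_le_mul_of_nonneg_left hgood hβ.le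
      nlinarith
    have hplL : κ₁ / ((i:ℝ)*L) ≤ p i n := hplb
    rw [phi_eq hβ hp0 hn0]
    have e1 : (β * (n:ℝ)) ^ (1-2*lam) = β ^ (1-2*lam) * (n:ℝ) ^ (1-2*lam) :=
      Real.mul_rpow hβ.le hnR.le
    calc c * (n:ℝ) ^ (1-2*lam) / L * (1/(i:ℝ))
        = (β ^ (1-2*lam) * (n:ℝ) ^ (1-2*lam)) * (κ₁ / ((i:ℝ)*L)) * (1+β*δ) ^ (-1+2*lam) := by
          rw [hcdef]; field_simp
      _ ≤ (β * (n:ℝ)) ^ (1-2*lam) * p i n * (1 + β * n * p i n) ^ (-1+2*lam) := by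
          rw [e1]
          have A : (0:ℝ) ≤ β ^ (1-2*lam) * (n:ℝ) ^ (1-2*lam) := by positivity
          have h4 : (β ^ (1-2*lam) * (n:ℝ) ^ (1-2*lam)) * (κ₁ / ((i:ℝ)*L))
              ≤ (β ^ (1-2*lam) * (n:ℝ) ^ (1-2*lam)) * p i n :=
            mul_le_mul_of_nonneg_left hplL A
          exact mul_le_mul h4 hfac (by positivity) (by positivity)
  -- sum up
  have hsub : Finset.Icc (m+1) n ⊆ Finset.Icc 1 n := Finset.Icc_subset_Icc (by omega) le_rfl
  calc c * (n:ℝ) ^ (1-2*lam) / L * Real.log (((n:ℝ)+1)/((m:ℝ)+1))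
      ≤ c * (n:ℝ) ^ (1-2*lam) / L * ∑ i ∈ Finset.Icc (m+1) n, (1:ℝ)/i := by
        apply mul_le_mul_of_nonneg_left _ (by positivity)
        have := harmonic_lb m n (by omega)
        exact_mod_cast this
    _ = ∑ i ∈ Finset.Icc (m+1) n, c * (n:ℝ) ^ (1-2*lam) / L * (1/(i:ℝ)) := by
        rw [Finset.mul_sum]
    _ ≤ ∑ i ∈ Finset.Icc (m+1) n, phiW lam β (p i n) n := Finset.sum_le_sum hpoint
    _ ≤ ∑ i ∈ Finset.Icc 1 n, phiW lam β (p i n) n := by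
        apply Finset.sum_le_sum_of_subset_of_nonneg hsub
        intro i hi _
        simp only [Finset.mem_Icc] at hi
        exact (phi_pos hβ (hp i hi.1 hi.2).1 hn0).le

lemma small {lam β κ₁ κ₂ : ℝ} (hlam : 2*lam < 1) (hβ : 0 < β)
    {p : ℕ → ℕ → ℝ} (hz : IsZipfArray p κ₁ κ₂) (δ η : ℝ) (hδ : 0 < δ) (hη : 0 < η) :
    ∀ᶠ n : ℕ in atTop,
      ∑ i ∈ (Finset.Icc 1 n).filter (fun i => δ < (n:ℝ) * p i n), phiW lam β (p i n) n
        ≤ η * ∑ i ∈ Finset.Icc 1 n, phiW lam β (p i n) n := by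
  obtain ⟨hκ₁, hκ, hzb⟩ := hz
  have hκ₂ : 0 < κ₂ := lt_of_lt_of_le hκ₁ hκ
  set C₅ := max (κ₁ ^ (2*lam)) (κ₂ ^ (2*lam)) * max 1 (1-2*lam)⁻¹ * (κ₂/δ) ^ (1-2*lam)
    with hC₅def
  set C₂ := β ^ (1-2*lam) * (1+β*δ) ^ (-1+2*lam) * κ₁ with hC₂def
  have hC₅0 : 0 < C₅ := by
    apply mul_pos (mul_pos (lt_max_of_lt_left (Real.rpow_pos_of_pos hκ₁ _))
      (lt_max_of_lt_left one_pos)) (Real.rpow_pos_of_pos (by positivity) _)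
  have hC₂0 : 0 < C₂ :=
    mul_pos (mul_pos (Real.rpow_pos_of_pos hβ _) (Real.rpow_pos_of_pos (by positivity) _)) hκ₁
  set T := C₅ / (η * C₂) with hTdef
  have hT0 : 0 < T := by positivity
  set K := κ₂ / δ with hKdef
  have hK0 : 0 < K := by positivity
  have hlog : Tendsto (fun n : ℕ => Real.log n) atTop atTop :=
    Real.tendsto_log_atTop.comp tendsto_natCast_atTop_atTop
  have F2 : ∀ᶠ n : ℕ in atTop, Real.exp T * (2*K) + 2*K + 1 ≤ Real.log n :=
    hlog.eventually_ge_atTop _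
  have F3 : ∀ᶠ n : ℕ in atTop, (1:ℝ) ≤ κ₂ * n / (δ * Real.log n) := by
    have hlt : (fun x : ℝ => Real.log x) =o[atTop] id := Real.isLittleO_log_id_atTop
    have h := (tendsto_natCast_atTop_atTop (R := ℝ)).eventually
      (hlt.def (by positivity : (0:ℝ) < κ₂/δ))
    filter_upwards [h, eventually_ge_atTop 3] with n hn h3
    have hL : 1 ≤ Real.log n := log_ge_one h3
    have hnR : (0:ℝ) < n := by positivity
    simp only [id, Real.norm_eq_abs] at hn
    rw [abs_of_nonneg (by linarith), abs_of_nonneg hnR.le] at hn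
    rw [le_div_iff₀ (by positivity)]
    rw [div_mul_eq_mul_div, le_div_iff₀ hδ] at hn
    nlinarith
  filter_upwards [F2, F3, eventually_ge_atTop 3] with n hF2 hF3 h3
  have hL : 1 ≤ Real.log n := log_ge_one h3
  have hL0 : (0:ℝ) < Real.log n := by linarith
  have hn0 : 0 < n := by omega
  have hnR : (0:ℝ) < n := by exact_mod_cast hn0
  set L := Real.log n with hLdef
  set m := ⌊κ₂ * n / (δ * L)⌋₊ with hmdef
  have hxK : κ₂ * n / (δ * L) = K * ((n:ℝ)/L) := by rw [hKdef]; field_simp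
  have hm1 : (m:ℝ) + 1 ≤ 2*K*((n:ℝ)/L) := by
    have h1 : (m:ℝ) ≤ κ₂ * n / (δ * L) := Nat.floor_le (by positivity)
    rw [hxK] at h1 hF3
    linarith
  have hET : 0 < Real.exp T := Real.exp_pos T
  have hmn : m + 1 ≤ n := by
    have : (m:ℝ) + 1 ≤ (n:ℝ) := by
      have h2K : 2*K ≤ L := by nlinarith
      calc (m:ℝ) + 1 ≤ 2*K*((n:ℝ)/L) := hm1
        _ ≤ L * ((n:ℝ)/L) := by
            apply mul_le_mul_of_nonneg_right h2K (by positivity)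
        _ = (n:ℝ) := by field_simp
    exact_mod_cast this
  set q := ((n:ℝ)+1)/((m:ℝ)+1) with hqdef
  have hm1p : (0:ℝ) < (m:ℝ) + 1 := by positivity
  have hq : Real.exp T ≤ q := by
    have h1 : L/(2*K) ≤ (n:ℝ)/((m:ℝ)+1) := by
      rw [div_le_div_iff₀ (by positivity) hm1p]
      have := mul_le_mul_of_nonneg_left hm1 hL0.le
      calc L * ((m:ℝ)+1) ≤ L * (2*K*((n:ℝ)/L)) := this
        _ = (n:ℝ) * (2*K) := by field_simp
    have h2 : Real.exp T ≤ L/(2*K) := by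
      rw [le_div_iff₀ (by positivity)]
      nlinarith
    have h3' : (n:ℝ)/((m:ℝ)+1) ≤ q := by
      rw [hqdef]
      gcongr
      linarith
    linarith
  have hlogq : T ≤ Real.log q := by
    calc T = Real.log (Real.exp T) := (Real.log_exp T).symm
      _ ≤ Real.log q := Real.log_le_log hET hq
  have hp' : ∀ i : ℕ, 1 ≤ i → i ≤ n → 0 < p i n ∧
      κ₁ / ((i : ℝ) * L) ≤ p i n ∧ p i n ≤ κ₂ / ((i : ℝ) * L) := by
    intro i h1 h2
    obtain ⟨a, b, c, d⟩ := hzb n (by omega) i h1 h2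
    exact ⟨a, c, d⟩
  have hbad := bad_sum hlam hβ hκ₁ hκ hδ h3 hp'
  have htot := total_lb hlam hβ hκ₁ hκ hδ h3 hp' hmn
  have hx' : (0:ℝ) ≤ (n:ℝ) ^ (1-2*lam) / L := by positivity
  have hC : C₅ ≤ η * C₂ * Real.log q := by
    have : C₅ = T * (η * C₂) := by rw [hTdef]; field_simp
    rw [this]
    calc T * (η * C₂) ≤ Real.log q * (η * C₂) :=
          mul_le_mul_of_nonneg_right hlogq (by positivity)
      _ = η * C₂ * Real.log q := by ring
  calc ∑ i ∈ (Finset.Icc 1 n).filter (fun i => δ < (n:ℝ) * p i n), phiW lam β (p i n) n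
      ≤ C₅ * (n:ℝ) ^ (1-2*lam) / L := hbad
    _ ≤ η * (C₂ * (n:ℝ) ^ (1-2*lam) / L * Real.log q) := by
        have := mul_le_mul_of_nonneg_right hC hx'
        calc C₅ * (n:ℝ) ^ (1-2*lam) / L = C₅ * ((n:ℝ) ^ (1-2*lam) / L) := by ring
          _ ≤ η * C₂ * Real.log q * ((n:ℝ) ^ (1-2*lam) / L) := this
          _ = η * (C₂ * (n:ℝ) ^ (1-2*lam) / L * Real.log q) := by ring
    _ ≤ η * ∑ i ∈ Finset.Icc 1 n, phiW lam β (p i n) n :=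
        mul_le_mul_of_nonneg_left htot hη.le

theorem stmt_10 {lam β κ₁ κ₂ : ℝ} (hlam : lam < 1/2) (hβ : 0 < β)
    (p : ℕ → ℕ → ℝ) (hz : IsZipfArray p κ₁ κ₂)
    (u : ℕ → ℕ → ℝ)
    (hbdd : ∃ M : ℝ, ∀ n : ℕ, 2 ≤ n → ∀ i : ℕ, 1 ≤ i → i ≤ n →
      |u i n| ≤ M * phiW lam β (p i n) n)
    (ℓ : ℝ)
    (hlim : ∀ ε : ℝ, 0 < ε → ∃ δ : ℝ, 0 < δ ∧ ∀ n : ℕ, 2 ≤ n → ∀ i : ℕ, 1 ≤ i → i ≤ n →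
      (n : ℝ) * p i n ≤ δ → |u i n / phiW lam β (p i n) n - ℓ| ≤ ε) :
    Tendsto (fun n : ℕ =>
        (∑ i ∈ Finset.Icc 1 n, u i n) / (∑ i ∈ Finset.Icc 1 n, phiW lam β (p i n) n))
      atTop (𝓝 ℓ) := by
  classical
  obtain ⟨M, hM⟩ := hbdd
  have hlam' : 2*lam < 1 := by linarith
  obtain ⟨hκ₁, hκ, hzb⟩ := hz
  rw [Metric.tendsto_atTop]
  intro ε hε
  set ε' := ε/3 with hε'def
  have hε' : 0 < ε' := by positivity
  obtain ⟨δ, hδ, hδprop⟩ := hlim ε' hε'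
  set M' := max M 0 with hM'def
  have hM'0 : (0:ℝ) ≤ M' := le_max_right _ _
  set η := ε' / (M' + |ℓ| + 1) with hηdef
  have hη : 0 < η := by positivity
  have hsmall := small hlam' hβ ⟨hκ₁, hκ, hzb⟩ δ η hδ hη
  obtain ⟨N, hN⟩ := eventually_atTop.1 (hsmall.and (eventually_ge_atTop 2))
  refine ⟨N, fun n hn => ?_⟩
  obtain ⟨hsm, hn2⟩ := hN n hn
  have hn0 : 0 < n := by omega
  have hnR : (0:ℝ) < n := by exact_mod_cast hn0
  set φ := fun i => phiW lam β (p i n) n with hφdef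
  set S := ∑ i ∈ Finset.Icc 1 n, φ i with hSdef
  have hφpos : ∀ i ∈ Finset.Icc 1 n, 0 < φ i := by
    intro i hi
    simp only [Finset.mem_Icc] at hi
    exact phi_pos hβ (hzb n hn2 i hi.1 hi.2).1 hn0
  have hS : 0 < S := Finset.sum_pos hφpos ⟨1, Finset.mem_Icc.2 ⟨le_rfl, by omega⟩⟩
  -- pointwise bound
  have hpoint : ∀ i ∈ Finset.Icc 1 n, |u i n - ℓ * φ i|
      ≤ if δ < (n:ℝ) * p i n then (M' + |ℓ|) * φ i else ε' * φ i := by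
    intro i hi
    simp only [Finset.mem_Icc] at hi
    have hφp : 0 < φ i := phi_pos hβ (hzb n hn2 i hi.1 hi.2).1 hn0
    split_ifs with hcase
    · have h1 : |u i n| ≤ M * φ i := hM n hn2 i hi.1 hi.2
      have h2 : M * φ i ≤ M' * φ i :=
        mul_le_mul_of_nonneg_right (le_max_left _ _) hφp.le
      calc |u i n - ℓ * φ i| ≤ |u i n| + |ℓ * φ i| := abs_sub _ _
        _ = |u i n| + |ℓ| * φ i := by rw [abs_mul, abs_of_pos hφp]
        _ ≤ M' * φ i + |ℓ| * φ i := by linarith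
        _ = (M' + |ℓ|) * φ i := by ring
    · push_neg at hcase
      have h1 := hδprop n hn2 i hi.1 hi.2 hcase
      have h2 : u i n - ℓ * φ i = (u i n / φ i - ℓ) * φ i := by
        field_simp
        try ring
      rw [h2, abs_mul, abs_of_pos hφp]
      exact mul_le_mul_of_nonneg_right h1 hφp.le
  -- sum bound
  have hsum : |∑ i ∈ Finset.Icc 1 n, u i n - ℓ * S| ≤ 2 * ε' * S := by
    have step1 : |∑ i ∈ Finset.Icc 1 n, u i n - ℓ * S|
        ≤ ∑ i ∈ Finset.Icc 1 n, |u i n - ℓ * φ i| := by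
      rw [hSdef, Finset.mul_sum, ← Finset.sum_sub_distrib]
      exact Finset.abs_sum_le_sum_abs _ _
    have step2 : ∑ i ∈ Finset.Icc 1 n, |u i n - ℓ * φ i|
        ≤ ∑ i ∈ Finset.Icc 1 n,
            (if δ < (n:ℝ) * p i n then (M' + |ℓ|) * φ i else ε' * φ i) :=
      Finset.sum_le_sum hpoint
    have step3 : ∑ i ∈ Finset.Icc 1 n,
          (if δ < (n:ℝ) * p i n then (M' + |ℓ|) * φ i else ε' * φ i)
        = (M' + |ℓ|) * (∑ i ∈ (Finset.Icc 1 n).filter (fun i => δ < (n:ℝ) * p i n), φ i)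
          + ε' * ∑ i ∈ (Finset.Icc 1 n).filter (fun i => ¬ δ < (n:ℝ) * p i n), φ i := by
      rw [Finset.sum_ite, Finset.mul_sum, Finset.mul_sum]
    have step4 : (M' + |ℓ|) * (∑ i ∈ (Finset.Icc 1 n).filter (fun i => δ < (n:ℝ) * p i n), φ i)
        ≤ ε' * S := by
      calc (M' + |ℓ|) * (∑ i ∈ (Finset.Icc 1 n).filter (fun i => δ < (n:ℝ) * p i n), φ i)
          ≤ (M' + |ℓ|) * (η * S) := by
            apply mul_le_mul_of_nonneg_left _ (by positivity)
            exact hsm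
        _ = (M' + |ℓ|) * η * S := by ring
        _ ≤ ε' * S := by
            apply mul_le_mul_of_nonneg_right _ hS.le
            rw [hηdef, mul_div_assoc', div_le_iff₀ (by positivity)]
            nlinarith [abs_nonneg ℓ]
    have step5 : ε' * ∑ i ∈ (Finset.Icc 1 n).filter (fun i => ¬ δ < (n:ℝ) * p i n), φ i
        ≤ ε' * S := by
      apply mul_le_mul_of_nonneg_left _ hε'.le
      apply Finset.sum_le_sum_of_subset_of_nonneg (Finset.filter_subset _ _)
      intro i hi _
      exact (hφpos i hi).le
    linarith
  -- conclude
  rw [Real.dist_eq]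
  have hS' : S ≠ 0 := hS.ne'
  have heq : (∑ i ∈ Finset.Icc 1 n, u i n) / S - ℓ
      = (∑ i ∈ Finset.Icc 1 n, u i n - ℓ * S) / S := by
    field_simp
    try ring
  rw [heq, abs_div, abs_of_pos hS]
  calc |∑ i ∈ Finset.Icc 1 n, u i n - ℓ * S| / S
      ≤ 2 * ε' * S / S := by gcongr
    _ = 2 * ε' := by field_simp
    _ < ε := by rw [hε'def]; linarith
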